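/- Let E = G⋉X⋊H be the iterated transformation groupoid of a (G,H)-equivalence of second countable locally compact Hausdorff groupoids with Haar systems {λ^u} on G and {σ^v} on H. Then the family λ_E^x := λ^{r_X(x)} × δ_x × σ^{s_X(x)}, x ∈ X, is a Haar system on E: each λ_E^x is supported on r⁻¹(x), the family is left-invariant, and x ↦ ∫ f dλ_E^x is continuous for f ∈ C_c(E). -/

import Mathlib

open MeasureTheory Filter Topology

/-- Algebraic data of a groupoid: arrows, objects (units), range, source,
unit inclusion, (total extensions of) composition and inversion. -/
structure GroupoidData (Arr : Type) (Obj : Type) where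
  r : Arr → Obj
  s : Arr → Obj
  unit : Obj → Arr
  comp : Arr → Arr → Arr
  inv : Arr → Arr

/-- The axioms making `GroupoidData` an honest groupoid (composition is only
required to behave on composable pairs). -/
structure GroupoidData.IsGroupoid {Arr Obj : Type} (D : GroupoidData Arr Obj) : Prop where
  r_unit : ∀ u, D.r (D.unit u) = u
  s_unit : ∀ u, D.s (D.unit u) = u
  r_comp : ∀ a b, D.s a = D.r b → D.r (D.comp a b) = D.r a
  s_comp : ∀ a b, D.s a = D.r b → D.s (D.comp a b) = D.s b
  comp_assoc : ∀ a b c, D.s a = D.r b → D.s b = D.r c →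
    D.comp (D.comp a b) c = D.comp a (D.comp b c)
  unit_comp : ∀ a, D.comp (D.unit (D.r a)) a = a
  comp_unit : ∀ a, D.comp a (D.unit (D.s a)) = a
  r_inv : ∀ a, D.r (D.inv a) = D.s a
  s_inv : ∀ a, D.s (D.inv a) = D.r a
  inv_comp : ∀ a, D.comp (D.inv a) a = D.unit (D.s a)
  comp_inv : ∀ a, D.comp a (D.inv a) = D.unit (D.r a)

/-- A left action of the groupoid `G` on a set `X` with moment map `rX`;
`lact γ x` is only meaningful when `G.s γ = rX x`. -/
structure IsLeftActionOf {ArrG ObjG X : Type} (G : GroupoidData ArrG ObjG)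
    (rX : X → ObjG) (lact : ArrG → X → X) : Prop where
  moment : ∀ γ x, G.s γ = rX x → rX (lact γ x) = G.r γ
  unit_act : ∀ x, lact (G.unit (rX x)) x = x
  comp_act : ∀ γ ξ x, G.s γ = G.r ξ → G.s ξ = rX x →
    lact (G.comp γ ξ) x = lact γ (lact ξ x)

/-- A right action of the groupoid `H` on a set `X` with moment map `sX`;
`ract x η` is only meaningful when `sX x = H.r η`. -/
structure IsRightActionOf {ArrH ObjH X : Type} (H : GroupoidData ArrH ObjH)
    (sX : X → ObjH) (ract : X → ArrH → X) : Prop where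
  moment : ∀ x η, sX x = H.r η → sX (ract x η) = H.s η
  unit_act : ∀ x, ract x (H.unit (sX x)) = x
  comp_act : ∀ x η ζ, sX x = H.r η → H.s η = H.r ζ →
    ract x (H.comp η ζ) = ract (ract x η) ζ

/-- The algebraic part of `X` being a `(G,H)`-equivalence: commuting free
left `G`- and right `H`-actions, each moment map invariant under the other
action, whose fibres are exactly the orbits of the other action, and both
moment maps surjective. -/
structure IsEquivalenceData {ArrG ObjG ArrH ObjH X : Type}
    (G : GroupoidData ArrG ObjG) (H : GroupoidData ArrH ObjH)
    (rX : X → ObjG) (sX : X → ObjH)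
    (lact : ArrG → X → X) (ract : X → ArrH → X) : Prop where
  left_action : IsLeftActionOf G rX lact
  right_action : IsRightActionOf H sX ract
  commute : ∀ γ x η, G.s γ = rX x → sX x = H.r η →
    ract (lact γ x) η = lact γ (ract x η)
  rX_ract : ∀ x η, sX x = H.r η → rX (ract x η) = rX x
  sX_lact : ∀ γ x, G.s γ = rX x → sX (lact γ x) = sX x
  free_left : ∀ γ x, G.s γ = rX x → lact γ x = x → γ = G.unit (rX x)
  free_right : ∀ x η, sX x = H.r η → ract x η = x → η = H.unit (sX x)
  rX_fibres : ∀ x y, rX x = rX y ↔ ∃ η, sX x = H.r η ∧ ract x η = y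
  sX_fibres : ∀ x y, sX x = sX y ↔ ∃ γ, G.s γ = rX x ∧ lact γ x = y
  rX_surj : Function.Surjective rX
  sX_surj : Function.Surjective sX

/-- Continuity of the structure maps of a topological groupoid. -/
structure IsTopologicalGroupoid {Arr Obj : Type} [TopologicalSpace Arr]
    [TopologicalSpace Obj] (D : GroupoidData Arr Obj) : Prop where
  continuous_r : Continuous D.r
  continuous_s : Continuous D.s
  continuous_unit : Continuous D.unit
  continuous_inv : Continuous D.inv
  continuous_comp : Continuous fun p : {q : Arr × Arr // D.s q.1 = D.r q.2} =>
    D.comp p.val.1 p.val.2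

/-- A Haar system for groupoid data `D`, relative to a set `Real` of
"genuine" arrows (take `Real = Set.univ` for an honest groupoid): a family
of Radon measures `κ u`, `u` a unit, with support exactly the genuine arrows
with range `u`, left invariant, and continuous against compactly supported
continuous functions. -/
def IsHaarSystemOn {Arr Obj : Type} [TopologicalSpace Arr] [TopologicalSpace Obj]
    [MeasurableSpace Arr] (D : GroupoidData Arr Obj) (Real : Set Arr)
    (κ : Obj → MeasureTheory.Measure Arr) : Prop :=
  (∀ u, κ u ({a | D.r a = u} ∩ Real)ᶜ = 0) ∧
  (∀ u U, IsOpen U → (U ∩ ({a | D.r a = u} ∩ Real)).Nonempty → 0 < κ u U) ∧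
  (∀ u K, IsCompact K → κ u K < ⊤) ∧
  (∀ a ∈ Real, ∀ f : Arr → ℝ, Continuous f → HasCompactSupport f →
    ∫ b, f (D.comp a b) ∂(κ (D.s a)) = ∫ b, f b ∂(κ (D.r a))) ∧
  (∀ f : Arr → ℝ, Continuous f → HasCompactSupport f →
    Continuous fun u => ∫ b, f b ∂(κ u))

/-- The measure `ν = μ ∘ κ` on the arrows induced by a measure `μ` on the
units and a Haar system `κ`. -/
noncomputable def nuMeasure {Arr Obj : Type} [MeasurableSpace Arr] [MeasurableSpace Obj]
    (κ : Obj → MeasureTheory.Measure Arr) (μ : MeasureTheory.Measure Obj) :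
    MeasureTheory.Measure Arr :=
  μ.bind κ

/-- Quasi-invariance of a measure `μ` on the unit space: `ν = μ∘κ` is
equivalent to its image under the inversion map. -/
def IsQuasiInvariant {Arr Obj : Type} [MeasurableSpace Arr] [MeasurableSpace Obj]
    (κ : Obj → MeasureTheory.Measure Arr) (inv : Arr → Arr)
    (μ : MeasureTheory.Measure Obj) : Prop :=
  nuMeasure κ μ ≪ (nuMeasure κ μ).map inv ∧ (nuMeasure κ μ).map inv ≪ nuMeasure κ μ


section EquivalenceSetting

variable {ArrG ObjG ArrH ObjH X : Type}

/-- The topological conditions making `X` a `(G,H)`-equivalence of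
topological groupoids: both groupoids are topological, the algebraic
equivalence conditions hold, the moment maps are continuous open surjections,
and the two actions are continuous and proper. -/
structure IsTopEquivalence [TopologicalSpace ArrG] [TopologicalSpace ObjG]
    [TopologicalSpace ArrH] [TopologicalSpace ObjH] [TopologicalSpace X]
    (G : GroupoidData ArrG ObjG) (H : GroupoidData ArrH ObjH)
    (rX : X → ObjG) (sX : X → ObjH)
    (lact : ArrG → X → X) (ract : X → ArrH → X) : Prop where
  G_groupoid : G.IsGroupoid
  H_groupoid : H.IsGroupoid
  G_top : IsTopologicalGroupoid G
  H_top : IsTopologicalGroupoid H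
  equivalence : IsEquivalenceData G H rX sX lact ract
  continuous_rX : Continuous rX
  continuous_sX : Continuous sX
  open_rX : IsOpenMap rX
  open_sX : IsOpenMap sX
  continuous_lact : Continuous fun p : {q : ArrG × X // G.s q.1 = rX q.2} =>
    lact p.val.1 p.val.2
  continuous_ract : Continuous fun p : {q : X × ArrH // sX q.1 = H.r q.2} =>
    ract p.val.1 p.val.2
  proper_lact : IsProperMap fun p : {q : ArrG × X // G.s q.1 = rX q.2} =>
    (lact p.val.1 p.val.2, p.val.2)
  proper_ract : IsProperMap fun p : {q : X × ArrH // sX q.1 = H.r q.2} =>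
    (ract p.val.1 p.val.2, p.val.2)

/-- The iterated transformation groupoid `E = G ⋉ X ⋊ H` (realized on the
ambient product; the genuine arrows form the set `ECond`). -/
def EData (G : GroupoidData ArrG ObjG) (H : GroupoidData ArrH ObjH)
    (rX : X → ObjG) (sX : X → ObjH)
    (lact : ArrG → X → X) (ract : X → ArrH → X) :
    GroupoidData (ArrG × X × ArrH) X where
  r := fun a => a.2.1
  s := fun a => ract (lact (G.inv a.1) a.2.1) a.2.2
  unit := fun x => (G.unit (rX x), x, H.unit (sX x))
  comp := fun a b => (G.comp a.1 b.1, a.2.1, H.comp a.2.2 b.2.2)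
  inv := fun a => (G.inv a.1, ract (lact (G.inv a.1) a.2.1) a.2.2, H.inv a.2.2)

/-- The set of genuine arrows of `E = G ⋉ X ⋊ H`:
`{(γ,x,η) : r(γ) = r_X(x), s_X(x) = r(η)}`. -/
def ECond (G : GroupoidData ArrG ObjG) (H : GroupoidData ArrH ObjH)
    (rX : X → ObjG) (sX : X → ObjH) : Set (ArrG × X × ArrH) :=
  {a | G.r a.1 = rX a.2.1 ∧ sX a.2.1 = H.r a.2.2}

/-- The transformation groupoid `Ḡ = G ⋉ X` (realized on the ambient
product; genuine arrows form `GbarCond`). -/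
def GbarData (G : GroupoidData ArrG ObjG) (rX : X → ObjG)
    (lact : ArrG → X → X) : GroupoidData (ArrG × X) X where
  r := fun p => p.2
  s := fun p => lact (G.inv p.1) p.2
  unit := fun x => (G.unit (rX x), x)
  comp := fun p q => (G.comp p.1 q.1, p.2)
  inv := fun p => (G.inv p.1, lact (G.inv p.1) p.2)

/-- Genuine arrows of `Ḡ = G ⋉ X`. -/
def GbarCond (G : GroupoidData ArrG ObjG) (rX : X → ObjG) : Set (ArrG × X) :=
  {p | G.r p.1 = rX p.2}

/-- The transformation groupoid `H̄ = X ⋊ H` (realized on the ambient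
product; genuine arrows form `HbarCond`). -/
def HbarData (H : GroupoidData ArrH ObjH) (sX : X → ObjH)
    (ract : X → ArrH → X) : GroupoidData (X × ArrH) X where
  r := fun p => p.1
  s := fun p => ract p.1 p.2
  unit := fun x => (x, H.unit (sX x))
  comp := fun p q => (p.1, H.comp p.2 q.2)
  inv := fun p => (ract p.1 p.2, H.inv p.2)

/-- Genuine arrows of `H̄ = X ⋊ H`. -/
def HbarCond (H : GroupoidData ArrH ObjH) (sX : X → ObjH) : Set (X × ArrH) :=
  {p | sX p.1 = H.r p.2}

variable [MeasurableSpace ArrG] [MeasurableSpace ArrH] [MeasurableSpace X]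

/-- The canonical Haar system `λ_E^x = λ^{r_X(x)} × δ_x × σ^{s_X(x)}` on
`E = G ⋉ X ⋊ H`. -/
noncomputable def EHaar (lamG : ObjG → MeasureTheory.Measure ArrG)
    (sigH : ObjH → MeasureTheory.Measure ArrH) (rX : X → ObjG) (sX : X → ObjH) :
    X → MeasureTheory.Measure (ArrG × X × ArrH) := fun x =>
  (lamG (rX x)).prod ((MeasureTheory.Measure.dirac x).prod (sigH (sX x)))

/-- The Haar system `λ^{r_X(x)} × δ_x` on `Ḡ = G ⋉ X`. -/
noncomputable def GbarHaar (lamG : ObjG → MeasureTheory.Measure ArrG)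
    (rX : X → ObjG) : X → MeasureTheory.Measure (ArrG × X) := fun x =>
  (lamG (rX x)).prod (MeasureTheory.Measure.dirac x)

/-- The Haar system `δ_x × σ^{s_X(x)}` on `H̄ = X ⋊ H`. -/
noncomputable def HbarHaar (sigH : ObjH → MeasureTheory.Measure ArrH)
    (sX : X → ObjH) : X → MeasureTheory.Measure (X × ArrH) := fun x =>
  (MeasureTheory.Measure.dirac x).prod (sigH (sX x))

end EquivalenceSetting


section AuxHelpers

open Set MeasureTheory

/-- A function whose support lies in a compact set has compact support. -/
lemma aux_hcs {W : Type} [TopologicalSpace W] [T2Space W] {f : W → ℝ} {K : Set W}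
    (hK : IsCompact K) (h : Function.support f ⊆ K) : HasCompactSupport f :=
  HasCompactSupport.intro hK fun w hw => by
    by_contra h0
    exact hw (h h0)

/-- cancellation in a groupoid: `γ⁻¹(γα) = α`. -/
lemma aux_comp_inv_cancel {Arr Obj : Type} (D : GroupoidData Arr Obj) (hD : D.IsGroupoid)
    (γ α : Arr) (h : D.s γ = D.r α) : D.comp (D.inv γ) (D.comp γ α) = α := by
  rw [← hD.comp_assoc (D.inv γ) γ α (hD.s_inv γ) h, hD.inv_comp, h, hD.unit_comp]

/-- Composition with a fixed arrow is continuous on the set of composable arrows. -/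
lemma aux_compContOn {Arr Obj : Type} [TopologicalSpace Arr] [TopologicalSpace Obj]
    (D : GroupoidData Arr Obj) (hD : IsTopologicalGroupoid D) (γ : Arr) :
    ContinuousOn (fun α => D.comp γ α) {α | D.r α = D.s γ} := by
  rw [continuousOn_iff_continuous_restrict]
  have hrw : Set.restrict {α | D.r α = D.s γ} (fun α => D.comp γ α) =
      (fun p : {q : Arr × Arr // D.s q.1 = D.r q.2} => D.comp p.val.1 p.val.2) ∘
        (fun α : {α | D.r α = D.s γ} => ⟨(γ, α.1), (α.2 : D.r α.1 = D.s γ).symm⟩) := rfl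
  change Continuous ((fun p : {q : Arr × Arr // D.s q.1 = D.r q.2} => D.comp p.val.1 p.val.2) ∘
    (fun α : {α | D.r α = D.s γ} => ⟨(γ, α.1), (α.2 : D.r α.1 = D.s γ).symm⟩))
  exact hD.continuous_comp.comp
    ((continuous_const.prodMk continuous_subtype_val).subtype_mk _)

/-- Product of full-measure sets has full measure. -/
lemma aux_prod_compl_null {A B : Type} [MeasurableSpace A] [MeasurableSpace B]
    {μ : Measure A} {ν : Measure B} [MeasureTheory.SFinite ν] {s : Set A} {t : Set B}
    (hs : μ sᶜ = 0) (ht : ν tᶜ = 0) : (μ.prod ν) (s ×ˢ t)ᶜ = 0 := by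
  have hsub : (s ×ˢ t)ᶜ ⊆ (sᶜ ×ˢ (Set.univ : Set B)) ∪ ((Set.univ : Set A) ×ˢ tᶜ) := by
    intro p hp
    by_cases h1 : p.1 ∈ s
    · by_cases h2 : p.2 ∈ t
      · exact absurd (Set.mem_prod.2 ⟨h1, h2⟩) hp
      · exact Or.inr ⟨trivial, h2⟩
    · exact Or.inl ⟨h1, trivial⟩
  refine measure_mono_null hsub (measure_union_null ?_ ?_) <;>
    rw [MeasureTheory.Measure.prod_prod] <;> simp [hs, ht]

/-- Integration against `μ × δ_x × ν` is integration against `μ × ν` along the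
obvious embedding; no measurability of the integrand is required. -/
lemma aux_embed {A' X' B' : Type} [MeasurableSpace A'] [MeasurableSpace X'] [MeasurableSpace B']
    [MeasurableSingletonClass X']
    (μ : Measure A') (ν : Measure B') [SFinite μ] [SFinite ν] (x : X')
    (g : A' × X' × B' → ℝ) :
    ∫ b, g b ∂(μ.prod ((Measure.dirac x).prod ν)) =
      ∫ p : A' × B', g (p.1, x, p.2) ∂(μ.prod ν) := by
  have h1 : (Measure.dirac x).prod ν = ν.map (Prod.mk x) := Measure.dirac_prod x
  have h2 : μ.prod (ν.map (Prod.mk x)) =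
      (μ.prod ν).map (fun p : A' × B' => ((id p.1 : A'), Prod.mk x p.2)) := by
    conv_lhs => rw [← Measure.map_id (μ := μ)]
    exact Measure.map_prod_map (f := id) (g := Prod.mk x) μ ν measurable_id
      measurable_prodMk_left
  have hemb : MeasurableEmbedding (fun p : A' × B' => ((id p.1 : A'), Prod.mk x p.2)) :=
    MeasurableEmbedding.id.prodMap (measurableEmbedding_prodMk_left x)
  rw [h1, h2, hemb.integral_map]
  simp only [id_eq]

/-- Key continuity lemma: integrating a jointly continuous compactly supported
function against a continuously varying Haar-type family of measures yields a
continuous compactly supported function. -/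
lemma aux_contIntegral {A O Z : Type} [TopologicalSpace A] [TopologicalSpace O]
    [TopologicalSpace Z] [T2Space A] [T2Space Z] [LocallyCompactSpace A]
    [MeasurableSpace A] [BorelSpace A]
    (κ : O → Measure A)
    (hfin : ∀ u K, IsCompact K → κ u K < ⊤)
    (hcont : ∀ f : A → ℝ, Continuous f → HasCompactSupport f →
      Continuous fun u => ∫ b, f b ∂κ u)
    {p : Z → O} (hp : Continuous p)
    {F : A × Z → ℝ} (hF : Continuous F) (hFc : HasCompactSupport F) :
    Continuous (fun z => ∫ α, F (α, z) ∂κ (p z)) ∧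
      HasCompactSupport (fun z => ∫ α, F (α, z) ∂κ (p z)) := by
  haveI : ∀ u, IsFiniteMeasureOnCompacts (κ u) := fun u => ⟨fun {K} hK => hfin u K hK⟩
  have hK0 : IsCompact (Prod.fst '' tsupport F) := hFc.image continuous_fst
  set K0 : Set A := Prod.fst '' tsupport F with hK0def
  have hout : ∀ (α : A) (z : Z), α ∉ K0 → F (α, z) = 0 := by
    intro α z hα
    by_contra h0
    exact hα ⟨(α, z), subset_tsupport _ h0, rfl⟩
  have hslc : ∀ z : Z, Continuous fun α => F (α, z) :=
    fun z => hF.comp (continuous_id.prodMk continuous_const)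
  have hsls : ∀ z : Z, HasCompactSupport fun α => F (α, z) := fun z =>
    HasCompactSupport.intro hK0 fun α hα => hout α z hα
  have hint : ∀ w z : Z, Integrable (fun α => F (α, w)) (κ (p z)) := fun w z =>
    (hslc w).integrable_of_hasCompactSupport (hsls w)
  constructor
  · obtain ⟨χ, hχ1, -, hχc, hχ01⟩ :=
      exists_continuous_one_zero_of_isCompact hK0 isClosed_empty (disjoint_empty _)
    have hχint : ∀ z, Integrable (fun α => χ α) (κ (p z)) :=
      fun z => χ.continuous.integrable_of_hasCompactSupport hχc
    set c : Z → ℝ := fun z => ∫ α, χ α ∂κ (p z) with hcdef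
    have hc : Continuous c := (hcont (fun α => χ α) χ.continuous hχc).comp hp
    rw [continuous_iff_continuousAt]
    intro z₀
    have hcz0 : 0 ≤ c z₀ := integral_nonneg fun α => (hχ01 α).1
    set ψ : Z → ℝ := fun z => ∫ α, F (α, z₀) ∂κ (p z) with hψdef
    have hψ : Continuous ψ := (hcont _ (hslc z₀) (hsls z₀)).comp hp
    rw [ContinuousAt, Metric.tendsto_nhds]
    intro ε hε
    set C : ℝ := c z₀ + 1 with hCdef
    have hC : 0 < C := by positivity
    set ε' : ℝ := ε / (2 * C) with hε'def
    have hε' : 0 < ε' := by positivity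
    have hopen : IsOpen {q : A × Z | |F q - F (q.1, z₀)| < ε'} :=
      isOpen_lt (Continuous.abs
        (hF.sub (hF.comp (continuous_fst.prodMk continuous_const)))) continuous_const
    have hsub : K0 ×ˢ ({z₀} : Set Z) ⊆ {q : A × Z | |F q - F (q.1, z₀)| < ε'} := by
      rintro ⟨α, z⟩ ⟨-, hz⟩
      rw [Set.mem_singleton_iff] at hz
      subst hz
      simpa using hε'
    obtain ⟨U, V, hU, hV, hK0U, hz0V, hUV⟩ :=
      generalized_tube_lemma hK0 isCompact_singleton hopen hsub
    have hVbound : ∀ z ∈ V, ∀ α, |F (α, z) - F (α, z₀)| ≤ ε' := by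
      intro z hz α
      by_cases hα : α ∈ K0
      · exact le_of_lt (hUV ⟨hK0U hα, hz⟩)
      · simp [hout α z hα, hout α z₀ hα, le_of_lt hε']
    have hE2 : ∀ᶠ z in nhds z₀, c z < C :=
      hc.continuousAt (Iio_mem_nhds (by simp [hCdef]))
    have hE3 : ∀ᶠ z in nhds z₀, dist (ψ z) (ψ z₀) < ε / 2 :=
      Metric.tendsto_nhds.1 hψ.continuousAt (ε / 2) (by positivity)
    filter_upwards [hV.mem_nhds (hz0V rfl), hE2, hE3] with z hz1 hz2 hz3
    have key1 : |(∫ α, F (α, z) ∂κ (p z)) - ψ z| ≤ ε' * c z := by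
      rw [hψdef, ← integral_sub (hint z z) (hint z₀ z)]
      calc |∫ α, (F (α, z) - F (α, z₀)) ∂κ (p z)|
          ≤ ∫ α, |F (α, z) - F (α, z₀)| ∂κ (p z) := by
            simpa [Real.norm_eq_abs] using
              norm_integral_le_integral_norm (fun α => F (α, z) - F (α, z₀)) (μ := κ (p z))
        _ ≤ ∫ α, ε' * χ α ∂κ (p z) := by
            apply integral_mono ((hint z z).sub (hint z₀ z)).abs ((hχint z).const_mul ε')
            intro α
            show |F (α, z) - F (α, z₀)| ≤ ε' * χ α
            by_cases hα : α ∈ K0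
            · have h1 : χ α = 1 := hχ1 hα
              rw [h1, mul_one]
              exact hVbound z hz1 α
            · simp [hout α z hα, hout α z₀ hα, mul_nonneg (le_of_lt hε') (hχ01 α).1]
        _ = ε' * c z := by rw [integral_const_mul]
    have key2 : ε' * c z ≤ ε / 2 := by
      have h1 : ε' * c z ≤ ε' * C := mul_le_mul_of_nonneg_left (le_of_lt hz2) (le_of_lt hε')
      have h2 : ε' * C = ε / 2 := by
        rw [hε'def]
        field_simp
      exact h1.trans (le_of_eq h2)
    rw [Real.dist_eq] at hz3 ⊢
    calc |(∫ α, F (α, z) ∂κ (p z)) - ∫ α, F (α, z₀) ∂κ (p z₀)|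
        ≤ |(∫ α, F (α, z) ∂κ (p z)) - ψ z| + |ψ z - ψ z₀| := abs_sub_le _ _ _
      _ < ε / 2 + ε / 2 := add_lt_add_of_le_of_lt (key1.trans key2) hz3
      _ = ε := by ring
  · apply HasCompactSupport.intro (hFc.image continuous_snd)
    intro z hz
    have h0 : ∀ α, F (α, z) = 0 := fun α => by
      by_contra h0
      exact hz ⟨(α, z), subset_tsupport _ h0, rfl⟩
    simp [h0]

end AuxHelpers


section AuxProd
open Set MeasureTheory

/-- Integration of a continuous compactly supported function against
`μ × δ_x × ν` as an iterated integral. -/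
lemma aux_prodIntegral {A' X' B' : Type} [TopologicalSpace A'] [TopologicalSpace X']
    [TopologicalSpace B'] [T2Space A'] [T2Space X'] [T2Space B']
    [MeasurableSpace A'] [BorelSpace A'] [MeasurableSpace X'] [BorelSpace X']
    [MeasurableSpace B'] [BorelSpace B']
    [SecondCountableTopology A'] [SecondCountableTopology X'] [SecondCountableTopology B']
    (μ : Measure A') (ν : Measure B') [SigmaFinite μ] [SigmaFinite ν]
    [IsFiniteMeasureOnCompacts μ] [IsFiniteMeasureOnCompacts ν] (x : X')
    (f : A' × X' × B' → ℝ) (hf : Continuous f) (hfc : HasCompactSupport f) :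
    ∫ b, f b ∂(μ.prod ((Measure.dirac x).prod ν)) = ∫ α, ∫ β, f (α, x, β) ∂ν ∂μ := by
  rw [aux_embed μ ν x f]
  have hcont : Continuous fun p : A' × B' => f (p.1, x, p.2) :=
    hf.comp (continuous_fst.prodMk (continuous_const.prodMk continuous_snd))
  have hcs : HasCompactSupport fun p : A' × B' => f (p.1, x, p.2) :=
    aux_hcs ((hfc.image continuous_fst).prod (hfc.image (continuous_snd.comp continuous_snd)))
      (fun p hp => ⟨⟨(p.1, x, p.2), subset_tsupport _ hp, rfl⟩,
        ⟨(p.1, x, p.2), subset_tsupport _ hp, rfl⟩⟩)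
  haveI : IsFiniteMeasureOnCompacts (μ.prod ν) := inferInstance
  rw [MeasureTheory.integral_prod _ (hcont.integrable_of_hasCompactSupport hcs)]

end AuxProd

/-- For a `(G,H)`-equivalence `X` of second countable
locally compact Hausdorff groupoids with Haar systems `λ` and `σ`, the family
`λ_E^x = λ^{r_X(x)} × δ_x × σ^{s_X(x)}` is a Haar system on the iterated
transformation groupoid `E = G ⋉ X ⋊ H`: each `λ_E^x` is supported exactly on
`r⁻¹(x)`, the family is left invariant and continuous. -/
theorem statement3
    {ArrG ObjG ArrH ObjH X : Type}
    [TopologicalSpace ArrG] [TopologicalSpace ObjG] [TopologicalSpace ArrH]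
    [TopologicalSpace ObjH] [TopologicalSpace X]
    [T2Space ArrG] [T2Space ObjG] [T2Space ArrH] [T2Space ObjH] [T2Space X]
    [SecondCountableTopology ArrG] [SecondCountableTopology ObjG]
    [SecondCountableTopology ArrH] [SecondCountableTopology ObjH]
    [SecondCountableTopology X]
    [LocallyCompactSpace ArrG] [LocallyCompactSpace ObjG] [LocallyCompactSpace ArrH]
    [LocallyCompactSpace ObjH] [LocallyCompactSpace X]
    [MeasurableSpace ArrG] [BorelSpace ArrG] [MeasurableSpace ArrH] [BorelSpace ArrH]
    [MeasurableSpace X] [BorelSpace X] [MeasurableSpace ObjH] [BorelSpace ObjH]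
    (G : GroupoidData ArrG ObjG) (H : GroupoidData ArrH ObjH)
    (rX : X → ObjG) (sX : X → ObjH) (lact : ArrG → X → X) (ract : X → ArrH → X)
    (heq : IsTopEquivalence G H rX sX lact ract)
    (lamG : ObjG → MeasureTheory.Measure ArrG)
    (hlamG : IsHaarSystemOn G Set.univ lamG)
    (sigH : ObjH → MeasureTheory.Measure ArrH)
    (hsigH : IsHaarSystemOn H Set.univ sigH)
    : IsHaarSystemOn (EData G H rX sX lact ract) (ECond G H rX sX)
      (EHaar lamG sigH rX sX) := by
  classical
  obtain ⟨hl1, hl2, hl3, hl4, hl5⟩ := hlamG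
  obtain ⟨hs1, hs2, hs3, hs4, hs5⟩ := hsigH
  have hGg := heq.G_groupoid
  have hHg := heq.H_groupoid
  have hGt := heq.G_top
  have hHt := heq.H_top
  have heqd := heq.equivalence
  have fG : ∀ u, MeasureTheory.IsFiniteMeasureOnCompacts (lamG u) :=
    fun u => ⟨fun {K} hK => hl3 u K hK⟩
  have fH : ∀ v, MeasureTheory.IsFiniteMeasureOnCompacts (sigH v) :=
    fun v => ⟨fun {K} hK => hs3 v K hK⟩
  have sG : ∀ u, MeasureTheory.SigmaFinite (lamG u) := fun u => by
    haveI := fG u; infer_instance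
  have sH : ∀ v, MeasureTheory.SigmaFinite (sigH v) := fun v => by
    haveI := fH v; infer_instance
  refine ⟨?_, ?_, ?_, ?_, ?_⟩
  · -- support
    intro x
    haveI := fG (rX x); haveI := fH (sX x)
    haveI := sG (rX x); haveI := sH (sX x)
    have hA : lamG (rX x) {α | G.r α = rX x}ᶜ = 0 := by
      have := hl1 (rX x); simpa using this
    have hB : sigH (sX x) {β | H.r β = sX x}ᶜ = 0 := by
      have := hs1 (sX x); simpa using this
    have hmid : ((MeasureTheory.Measure.dirac x).prod (sigH (sX x)))
        ((({x} : Set X) ×ˢ {β | H.r β = sX x})ᶜ) = 0 :=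
      aux_prod_compl_null (by simp) hB
    have hset : ({a : ArrG × X × ArrH | (EData G H rX sX lact ract).r a = x} ∩
          ECond G H rX sX)
        = {α | G.r α = rX x} ×ˢ ((({x} : Set X)) ×ˢ {β | H.r β = sX x}) := by
      ext a
      simp only [EData, ECond, Set.mem_inter_iff, Set.mem_setOf_eq, Set.mem_prod,
        Set.mem_singleton_iff]
      constructor
      · rintro ⟨h1, h2, h3⟩
        rw [h1] at h2 h3
        exact ⟨h2, h1, h3.symm⟩
      · rintro ⟨hA1, hA2, hA3⟩
        refine ⟨hA2, ?_, ?_⟩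
        · rw [hA2]; exact hA1
        · rw [hA2]; exact hA3.symm
    rw [hset]
    exact aux_prod_compl_null hA hmid
  · -- positivity on open sets
    rintro x U hU ⟨a, haU, har, hcond⟩
    haveI := fG (rX x); haveI := fH (sX x)
    haveI := sG (rX x); haveI := sH (sX x)
    obtain ⟨γ, y, η⟩ := a
    have har' : y = x := har
    subst har'
    have hc1 : G.r γ = rX y := hcond.1
    have hc2 : sX y = H.r η := hcond.2
    obtain ⟨U1, W, hU1, hW, hγ, hWmem, hUW⟩ := isOpen_prod_iff.1 hU γ (y, η) haU
    obtain ⟨U2, U3, hU2, hU3, hy, hη, hU23⟩ := isOpen_prod_iff.1 hW y η hWmem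
    have hsub : U1 ×ˢ (U2 ×ˢ U3) ⊆ U := fun p hp => hUW ⟨hp.1, hU23 hp.2⟩
    have hpos1 : 0 < lamG (rX y) U1 := hl2 (rX y) U1 hU1 ⟨γ, hγ, hc1, trivial⟩
    have hpos3 : 0 < sigH (sX y) U3 := hs2 (sX y) U3 hU3 ⟨η, hη, hc2.symm, trivial⟩
    have hpos2 : (0 : ENNReal) < MeasureTheory.Measure.dirac y U2 := by
      rw [MeasureTheory.Measure.dirac_apply' _ hU2.measurableSet,
        Set.indicator_of_mem hy]
      norm_num
    have key : EHaar lamG sigH rX sX y (U1 ×ˢ (U2 ×ˢ U3)) =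
        lamG (rX y) U1 * (MeasureTheory.Measure.dirac y U2 * sigH (sX y) U3) := by
      rw [show EHaar lamG sigH rX sX y =
        (lamG (rX y)).prod ((MeasureTheory.Measure.dirac y).prod (sigH (sX y))) from rfl,
        MeasureTheory.Measure.prod_prod, MeasureTheory.Measure.prod_prod]
    refine lt_of_lt_of_le ?_ (measure_mono hsub)
    rw [key]
    exact ENNReal.mul_pos (ne_of_gt hpos1)
      (ne_of_gt (ENNReal.mul_pos (ne_of_gt hpos2) (ne_of_gt hpos3)))
  · -- finiteness on compacts
    intro x K hK
    haveI := fG (rX x); haveI := fH (sX x)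
    haveI := sG (rX x); haveI := sH (sX x)
    have hsub : K ⊆ (Prod.fst '' K) ×ˢ (((fun a => a.2.1) '' K) ×ˢ ((fun a => a.2.2) '' K)) :=
      fun a ha => ⟨⟨a, ha, rfl⟩, ⟨a, ha, rfl⟩, ⟨a, ha, rfl⟩⟩
    refine lt_of_le_of_lt (measure_mono hsub) ?_
    rw [show EHaar lamG sigH rX sX x =
      (lamG (rX x)).prod ((MeasureTheory.Measure.dirac x).prod (sigH (sX x))) from rfl,
      MeasureTheory.Measure.prod_prod, MeasureTheory.Measure.prod_prod]
    exact ENNReal.mul_lt_top (hl3 _ _ (hK.image continuous_fst))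
      (ENNReal.mul_lt_top (measure_lt_top _ _)
        (hs3 _ _ (hK.image (continuous_snd.comp continuous_snd))))
  · -- left invariance
    rintro a ⟨h1, h2⟩ f hf hfc
    obtain ⟨γ, x, η⟩ := a
    haveI := fG (G.s γ); haveI := fG (G.r γ); haveI := fH (H.s η); haveI := fH (H.r η)
    haveI := sG (G.s γ); haveI := sG (G.r γ); haveI := sH (H.s η); haveI := sH (H.r η)
    have h1' : G.r γ = rX x := h1
    have h2' : sX x = H.r η := h2
    have hy : G.s (G.inv γ) = rX x := (hGg.s_inv γ).trans h1'
    have rXy : rX (lact (G.inv γ) x) = G.s γ :=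
      (heqd.left_action.moment _ _ hy).trans (hGg.r_inv γ)
    have sXy : sX (lact (G.inv γ) x) = sX x := heqd.sX_lact _ _ hy
    have hcm2 : sX (lact (G.inv γ) x) = H.r η := sXy.trans h2'
    have rXx' : rX (ract (lact (G.inv γ) x) η) = G.s γ :=
      (heqd.rX_ract _ _ hcm2).trans rXy
    have sXx' : sX (ract (lact (G.inv γ) x) η) = H.s η :=
      heqd.right_action.moment _ _ hcm2
    -- abbreviations
    have hmeasS : EHaar lamG sigH rX sX ((EData G H rX sX lact ract).s (γ, x, η)) =
        (lamG (G.s γ)).prod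
          ((MeasureTheory.Measure.dirac (ract (lact (G.inv γ) x) η)).prod (sigH (H.s η))) := by
      show (lamG (rX (ract (lact (G.inv γ) x) η))).prod
        ((MeasureTheory.Measure.dirac (ract (lact (G.inv γ) x) η)).prod
          (sigH (sX (ract (lact (G.inv γ) x) η)))) = _
      rw [rXx', sXx']
    have hLHS : ∫ b, f ((EData G H rX sX lact ract).comp (γ, x, η) b)
          ∂ EHaar lamG sigH rX sX ((EData G H rX sX lact ract).s (γ, x, η)) =
        ∫ p : ArrG × ArrH, f (G.comp γ p.1, x, H.comp η p.2)
          ∂ ((lamG (G.s γ)).prod (sigH (H.s η))) := by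
      rw [hmeasS]
      exact aux_embed _ _ _ _
    -- null sets
    have hAnull : lamG (G.s γ) ({α | G.r α = G.s γ}ᶜ) = 0 := by
      have := hl1 (G.s γ); simpa using this
    have hBnull : sigH (H.s η) ({β | H.r β = H.s η}ᶜ) = 0 := by
      have := hs1 (H.s η); simpa using this
    have hAclosed : IsClosed {α | G.r α = G.s γ} := isClosed_eq hGt.continuous_r continuous_const
    have hBclosed : IsClosed {β | H.r β = H.s η} := isClosed_eq hHt.continuous_r continuous_const
    have hg₁contOn : ContinuousOn (fun p : ArrG × ArrH => f (G.comp γ p.1, x, H.comp η p.2))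
        ({α | G.r α = G.s γ} ×ˢ {β | H.r β = H.s η}) := by
      apply hf.comp_continuousOn
      apply ContinuousOn.prodMk
      · exact (aux_compContOn G hGt γ).comp continuousOn_fst fun p hp => hp.1
      · exact ContinuousOn.prodMk continuousOn_const
          ((aux_compContOn H hHt η).comp continuousOn_snd fun p hp => hp.2)
    have haemem : ∀ᵐ p ∂ (lamG (G.s γ)).prod (sigH (H.s η)),
        p ∈ {α | G.r α = G.s γ} ×ˢ {β | H.r β = H.s η} := by
      rw [MeasureTheory.ae_iff]
      exact aux_prod_compl_null hAnull hBnull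
    have hAESM : MeasureTheory.AEStronglyMeasurable
        (fun p : ArrG × ArrH => f (G.comp γ p.1, x, H.comp η p.2))
        ((lamG (G.s γ)).prod (sigH (H.s η))) := by
      rw [← MeasureTheory.Measure.restrict_eq_self_of_ae_mem haemem]
      exact hg₁contOn.aestronglyMeasurable (hAclosed.measurableSet.prod hBclosed.measurableSet)
    obtain ⟨C, hC⟩ := hf.bounded_above_of_compact_support hfc
    have hKfc : IsCompact (Prod.fst '' tsupport f) := hfc.image continuous_fst
    have hKhc : IsCompact ((fun t : ArrG × X × ArrH => t.2.2) '' tsupport f) :=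
      hfc.image (continuous_snd.comp continuous_snd)
    have hKαc : IsCompact ((fun k => G.comp (G.inv γ) k) ''
        ((Prod.fst '' tsupport f) ∩ {k | G.r k = G.r γ})) := by
      apply IsCompact.image_of_continuousOn
      · exact hKfc.inter_right (isClosed_eq hGt.continuous_r continuous_const)
      · apply (aux_compContOn G hGt (G.inv γ)).mono
        intro k hk
        show G.r k = G.s (G.inv γ)
        rw [hGg.s_inv]
        exact hk.2
    have hKβc : IsCompact ((fun k => H.comp (H.inv η) k) ''
        (((fun t : ArrG × X × ArrH => t.2.2) '' tsupport f) ∩ {k | H.r k = H.r η})) := by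
      apply IsCompact.image_of_continuousOn
      · exact hKhc.inter_right (isClosed_eq hHt.continuous_r continuous_const)
      · apply (aux_compContOn H hHt (H.inv η)).mono
        intro k hk
        show H.r k = H.s (H.inv η)
        rw [hHg.s_inv]
        exact hk.2
    have hKmeas : MeasurableSet (((fun k => G.comp (G.inv γ) k) ''
        ((Prod.fst '' tsupport f) ∩ {k | G.r k = G.r γ})) ×ˢ
        ((fun k => H.comp (H.inv η) k) ''
        (((fun t : ArrG × X × ArrH => t.2.2) '' tsupport f) ∩ {k | H.r k = H.r η}))) :=
      (hKαc.isClosed.measurableSet).prod (hKβc.isClosed.measurableSet)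
    have hboundInt : MeasureTheory.Integrable
        ((((fun k => G.comp (G.inv γ) k) ''
        ((Prod.fst '' tsupport f) ∩ {k | G.r k = G.r γ})) ×ˢ
        ((fun k => H.comp (H.inv η) k) ''
        (((fun t : ArrG × X × ArrH => t.2.2) '' tsupport f) ∩ {k | H.r k = H.r η}))).indicator
          fun _ => max C 0) ((lamG (G.s γ)).prod (sigH (H.s η))) := by
      haveI : MeasureTheory.IsFiniteMeasureOnCompacts
          ((lamG (G.s γ)).prod (sigH (H.s η))) := inferInstance
      rw [MeasureTheory.integrable_indicator_iff hKmeas]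
      exact MeasureTheory.integrableOn_const ((hKαc.prod hKβc).measure_lt_top.ne)
    have hbound : ∀ᵐ p ∂ (lamG (G.s γ)).prod (sigH (H.s η)),
        ‖f (G.comp γ p.1, x, H.comp η p.2)‖ ≤
        ((((fun k => G.comp (G.inv γ) k) ''
        ((Prod.fst '' tsupport f) ∩ {k | G.r k = G.r γ})) ×ˢ
        ((fun k => H.comp (H.inv η) k) ''
        (((fun t : ArrG × X × ArrH => t.2.2) '' tsupport f) ∩ {k | H.r k = H.r η}))).indicator
          fun _ => max C 0) p := by
      filter_upwards [haemem] with p hp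
      by_cases h0 : f (G.comp γ p.1, x, H.comp η p.2) = 0
      · rw [h0]
        simp only [norm_zero]
        exact Set.indicator_nonneg (fun _ _ => le_max_right _ _) p
      · have hmemT : (G.comp γ p.1, x, H.comp η p.2) ∈ tsupport f := subset_tsupport f h0
        have hcg : G.s γ = G.r p.1 := (hp.1 : G.r p.1 = G.s γ).symm
        have hch : H.s η = H.r p.2 := (hp.2 : H.r p.2 = H.s η).symm
        have hmem : p ∈ (((fun k => G.comp (G.inv γ) k) ''
            ((Prod.fst '' tsupport f) ∩ {k | G.r k = G.r γ})) ×ˢ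
            ((fun k => H.comp (H.inv η) k) ''
            (((fun t : ArrG × X × ArrH => t.2.2) '' tsupport f) ∩ {k | H.r k = H.r η}))) := by
          constructor
          · exact ⟨G.comp γ p.1, ⟨⟨_, hmemT, rfl⟩, hGg.r_comp γ p.1 hcg⟩,
              aux_comp_inv_cancel G hGg γ p.1 hcg⟩
          · exact ⟨H.comp η p.2, ⟨⟨_, hmemT, rfl⟩, hHg.r_comp η p.2 hch⟩,
              aux_comp_inv_cancel H hHg η p.2 hch⟩
        rw [Set.indicator_of_mem hmem]
        exact (hC _).trans (le_max_left _ _)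
    have hg₁int : MeasureTheory.Integrable
        (fun p : ArrG × ArrH => f (G.comp γ p.1, x, H.comp η p.2))
        ((lamG (G.s γ)).prod (sigH (H.s η))) :=
      MeasureTheory.Integrable.mono' hboundInt hAESM hbound
    -- the auxiliary function h
    have hhF : Continuous (fun q : ArrH × ArrG => f (q.2, x, q.1)) :=
      hf.comp (continuous_snd.prodMk (continuous_const.prodMk continuous_fst))
    have hhFc : HasCompactSupport (fun q : ArrH × ArrG => f (q.2, x, q.1)) :=
      aux_hcs (hKhc.prod hKfc) fun q hq =>
        ⟨⟨_, subset_tsupport f hq, rfl⟩, ⟨_, subset_tsupport f hq, rfl⟩⟩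
    obtain ⟨hhcont, hhcs⟩ := aux_contIntegral sigH hs3 hs5
      (continuous_const : Continuous fun _ : ArrG => H.r η) hhF hhFc
    have hslice : ∀ c : ArrG,
        ∫ β, f (c, x, H.comp η β) ∂ sigH (H.s η) = ∫ β, f (c, x, β) ∂ sigH (H.r η) := by
      intro c
      exact hs4 η (Set.mem_univ η) (fun β => f (c, x, β))
        (hf.comp (continuous_const.prodMk (continuous_const.prodMk continuous_id)))
        (aux_hcs hKhc fun β hβ => ⟨_, subset_tsupport f hβ, rfl⟩)
    calc ∫ b, f ((EData G H rX sX lact ract).comp (γ, x, η) b)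
          ∂ EHaar lamG sigH rX sX ((EData G H rX sX lact ract).s (γ, x, η))
        = ∫ p : ArrG × ArrH, f (G.comp γ p.1, x, H.comp η p.2)
            ∂ ((lamG (G.s γ)).prod (sigH (H.s η))) := hLHS
      _ = ∫ α, ∫ β, f (G.comp γ α, x, H.comp η β) ∂ sigH (H.s η) ∂ lamG (G.s γ) :=
          MeasureTheory.integral_prod _ hg₁int
      _ = ∫ α, (fun c => ∫ β, f (c, x, β) ∂ sigH (H.r η)) (G.comp γ α) ∂ lamG (G.s γ) := by
          congr 1
          funext α
          exact hslice (G.comp γ α)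
      _ = ∫ c, ∫ β, f (c, x, β) ∂ sigH (H.r η) ∂ lamG (G.r γ) :=
          hl4 γ (Set.mem_univ γ) _ hhcont hhcs
      _ = ∫ b, f b ∂ EHaar lamG sigH rX sX ((EData G H rX sX lact ract).r (γ, x, η)) := by
          have hmeasR : EHaar lamG sigH rX sX ((EData G H rX sX lact ract).r (γ, x, η)) =
              (lamG (G.r γ)).prod
                ((MeasureTheory.Measure.dirac x).prod (sigH (H.r η))) := by
            show (lamG (rX x)).prod
              ((MeasureTheory.Measure.dirac x).prod (sigH (sX x))) = _
            rw [h1', h2']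
          rw [hmeasR, aux_prodIntegral (lamG (G.r γ)) (sigH (H.r η)) x f hf hfc]
  · -- continuity
    intro f hf hfc
    have hKfc : IsCompact (Prod.fst '' tsupport f) := hfc.image continuous_fst
    have hKmc : IsCompact ((fun t : ArrG × X × ArrH => t.2.1) '' tsupport f) :=
      hfc.image (continuous_fst.comp continuous_snd)
    have hKhc : IsCompact ((fun t : ArrG × X × ArrH => t.2.2) '' tsupport f) :=
      hfc.image (continuous_snd.comp continuous_snd)
    have hF₁ : Continuous (fun q : ArrH × (ArrG × X) => f (q.2.1, q.2.2, q.1)) :=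
      hf.comp ((continuous_fst.comp continuous_snd).prodMk
        ((continuous_snd.comp continuous_snd).prodMk continuous_fst))
    have hF₁c : HasCompactSupport (fun q : ArrH × (ArrG × X) => f (q.2.1, q.2.2, q.1)) :=
      aux_hcs (hKhc.prod (hKfc.prod hKmc)) fun q hq =>
        ⟨⟨_, subset_tsupport f hq, rfl⟩, ⟨_, subset_tsupport f hq, rfl⟩,
          ⟨_, subset_tsupport f hq, rfl⟩⟩
    obtain ⟨hgcont, hgcs⟩ := aux_contIntegral sigH hs3 hs5
      (heq.continuous_sX.comp continuous_snd) hF₁ hF₁c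
    obtain ⟨hΦcont, -⟩ := aux_contIntegral lamG hl3 hl5 heq.continuous_rX
      (F := fun q : ArrG × X => ∫ β, f (q.1, q.2, β) ∂ sigH (sX q.2)) hgcont hgcs
    have hrw : (fun u => ∫ b, f b ∂ EHaar lamG sigH rX sX u) =
        (fun u => ∫ α, ∫ β, f (α, u, β) ∂ sigH (sX u) ∂ lamG (rX u)) := by
      funext u
      haveI := fG (rX u); haveI := fH (sX u)
      haveI := sG (rX u); haveI := sH (sX u)
      exact aux_prodIntegral (lamG (rX u)) (sigH (sX u)) u f hf hfc
    rw [hrw]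
    exact hΦcont
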